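/- Let N ≥ 4 be even and let L_{C,π} = −2·I_N − A_C, where A_C is the adjacency matrix of the unweighted simple cycle on N vertices. Define M ∈ ℝ^{N×N} by M_{mn} = (−1)^{|n−m|+1}·[ (n−m)²/(2N) − |n−m|/2 + (N²−1)/(12N) ] for 0 ≤ m,n ≤ N−1, and define K ∈ ℝ^{N×N} by K_{mn} = (−1)^{n−m}. Then L_{C,π}·M = M·L_{C,π} = I_N − (1/N)·K and M·K = K·M = 0; consequently M is the Moore–Penrose pseudoinverse of L_{C,π}, and its entries equal (−1)^{|n−m|+1} times the entries of the Moore–Penrose pseudoinverse of the ordinary cycle Laplacian L_C. -/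

import Mathlib

open Matrix Finset

private lemma negpow_mod2 {a b : ℕ} (h : a % 2 = b % 2) : (-1:ℝ)^a = (-1)^b := by
  rcases Nat.even_or_odd a with ha | ha
  · have hb : Even b := by rw [Nat.even_iff] at *; omega
    rw [ha.neg_one_pow, hb.neg_one_pow]
  · have hb : Odd b := by rw [Nat.odd_iff] at *; omega
    rw [ha.neg_one_pow, hb.neg_one_pow]

private noncomputable def gfun (N : ℕ) (d : ℤ) : ℝ :=
  (-1)^(d.natAbs+1) * ((d:ℝ)^2/(2*N) - (d.natAbs : ℝ)/2 + ((N:ℝ)^2-1)/(12*N))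

private noncomputable def Gfun (N : ℕ) (d : ℤ) : ℝ := gfun N (d % N)

private lemma Gfun_congr {N : ℕ} {d e : ℤ} (h : d % N = e % N) : Gfun N d = Gfun N e := by
  unfold Gfun; rw [h]

private lemma gfun_symm {N : ℕ} (hNe : Even N) (hN : 0 < N) {e : ℤ} (h0 : 0 ≤ e) (h1 : e ≤ N) :
    gfun N ((N:ℤ) - e) = gfun N e := by
  obtain ⟨a, rfl⟩ : ∃ a : ℕ, e = (a:ℤ) := ⟨e.toNat, by omega⟩
  have haN : a ≤ N := by exact_mod_cast h1
  have hna : ((N:ℤ) - a).natAbs = N - a := by omega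
  unfold gfun
  rw [hna]
  have hsign : (-1:ℝ)^(N - a + 1) = (-1)^(a+1) := by
    apply negpow_mod2
    have : N % 2 = 0 := Nat.even_iff.mp hNe
    omega
  rw [hsign]
  have hc : ((N - a : ℕ) : ℝ) = (N:ℝ) - a := by
    push_cast [Nat.cast_sub haN]; ring
  rw [hc]
  rw [Int.natAbs_natCast]
  have hN0 : (N:ℝ) ≠ 0 := by positivity
  push_cast
  field_simp
  ring

private lemma Gfun_eq_gfun {N : ℕ} (hN : 0 < N) {d : ℤ} (h0 : 0 ≤ d) (h1 : d < N) :
    Gfun N d = gfun N d := by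
  unfold Gfun; rw [Int.emod_eq_of_lt h0 h1]

private lemma Gfun_rec {N : ℕ} (hN : 4 ≤ N) (hNe : Even N) (r : ℤ) (h0 : 0 ≤ r) (h1 : r < N) :
    -(2 * Gfun N r) - Gfun N (r-1) - Gfun N (r+1)
      = (if r = 0 then 1 else 0) - (-1:ℝ)^r.natAbs / N := by
  have hN0 : (N:ℝ) ≠ 0 := by positivity
  have hNpos : 0 < N := by omega
  by_cases hr0 : r = 0
  · subst hr0
    have e1 : Gfun N 0 = gfun N 0 := Gfun_eq_gfun hNpos le_rfl (by exact_mod_cast hNpos)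
    have e2 : Gfun N (0-1) = gfun N 1 := by
      have : Gfun N (0-1) = Gfun N ((N:ℤ)-1) := Gfun_congr (by
        have := Int.add_mul_emod_self_left (a := (N:ℤ)-1) (b := (N:ℤ)) (c := -1)
        rw [show ((N:ℤ)-1) + N*(-1) = 0-1 by ring] at this
        rw [this])
      rw [this, Gfun_eq_gfun hNpos (by omega) (by omega), gfun_symm hNe hNpos (by omega) (by omega)]
    have e3 : Gfun N (0+1) = gfun N 1 := by
      rw [show (0:ℤ)+1 = 1 by ring]
      exact Gfun_eq_gfun hNpos (by omega) (by omega)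
    rw [e1, e2, e3]
    unfold gfun
    norm_num
    field_simp
    ring
  · by_cases hrN : r = (N:ℤ) - 1
    · subst hrN
      have e1 : Gfun N ((N:ℤ)-1) = gfun N 1 := by
        rw [Gfun_eq_gfun hNpos (by omega) (by omega), gfun_symm hNe hNpos (by omega) (by omega)]
      have e2 : Gfun N ((N:ℤ)-1-1) = gfun N 2 := by
        rw [show (N:ℤ)-1-1 = (N:ℤ)-2 by ring,
          Gfun_eq_gfun hNpos (by omega) (by omega), gfun_symm hNe hNpos (by omega) (by omega)]
      have e3 : Gfun N ((N:ℤ)-1+1) = gfun N 0 := by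
        rw [show (N:ℤ)-1+1 = (N:ℤ) by ring]
        unfold Gfun
        rw [Int.emod_self]
      have esign : (-1:ℝ)^((N:ℤ)-1).natAbs = -1 := by
        have hna : ((N:ℤ)-1).natAbs = N - 1 := by omega
        rw [hna]
        have : (-1:ℝ)^(N-1) = (-1:ℝ)^1 := negpow_mod2 (by
          have : N % 2 = 0 := Nat.even_iff.mp hNe
          omega)
        rw [this]; norm_num
      rw [e1, e2, e3, esign, if_neg (by omega)]
      unfold gfun
      norm_num
      field_simp
      ring
    · obtain ⟨b, hb⟩ : ∃ b : ℕ, r = (b:ℤ) + 1 := ⟨(r-1).toNat, by omega⟩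
      subst hb
      have e1 : Gfun N ((b:ℤ)+1) = gfun N ((b:ℤ)+1) := Gfun_eq_gfun hNpos (by omega) (by omega)
      have e2 : Gfun N ((b:ℤ)+1-1) = gfun N (b:ℤ) := by
        rw [show (b:ℤ)+1-1 = (b:ℤ) by ring]
        exact Gfun_eq_gfun hNpos (by omega) (by omega)
      have e3 : Gfun N ((b:ℤ)+1+1) = gfun N ((b:ℤ)+2) := by
        rw [show (b:ℤ)+1+1 = (b:ℤ)+2 by ring]
        exact Gfun_eq_gfun hNpos (by omega) (by omega)
      rw [e1, e2, e3, if_neg (by omega)]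
      unfold gfun
      have n1 : ((b:ℤ)+1).natAbs = b+1 := by omega
      have n2 : ((b:ℤ)).natAbs = b := by omega
      have n3 : ((b:ℤ)+2).natAbs = b+2 := by omega
      rw [n1, n2, n3]
      push_cast
      simp only [pow_succ]
      field_simp
      ring

private lemma sum_gfun_alt {N : ℕ} (hN : 4 ≤ N) :
    ∑ k ∈ Finset.range N, (-1:ℝ)^k * gfun N (k:ℤ) = 0 := by
  have hN0 : (N:ℝ) ≠ 0 := by positivity
  have h1 : ∀ n:ℕ, ∑ k ∈ range n, (2*(k:ℝ)) = (n:ℝ)^2 - n := by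
    intro n; induction n with
    | zero => simp
    | succ m ih => rw [sum_range_succ, ih]; push_cast; ring
  have h2 : ∀ n:ℕ, ∑ k ∈ range n, (6*(k:ℝ)^2) = 2*(n:ℝ)^3 - 3*(n:ℝ)^2 + n := by
    intro n; induction n with
    | zero => simp
    | succ m ih => rw [sum_range_succ, ih]; push_cast; ring
  have step : ∀ k ∈ range N, (-1:ℝ)^k * gfun N (k:ℤ) =
      -((1:ℝ)/(12*N))*(6*(k:ℝ)^2) + ((1:ℝ)/4)*(2*(k:ℝ)) + (-(((N:ℝ)^2-1)/(12*N))) := by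
    intro k _
    unfold gfun
    have hna : ((k:ℤ)).natAbs = k := by omega
    rw [hna]
    have hsq : (-1:ℝ)^k * (-1)^k = 1 := by rw [← mul_pow]; norm_num
    rw [pow_succ]
    push_cast
    linear_combination (-((k:ℝ)^2/(2*(N:ℝ)) - (k:ℝ)/2 + ((N:ℝ)^2-1)/(12*(N:ℝ)))) * hsq
  calc ∑ k ∈ range N, ((-1:ℝ)^k * gfun N (k:ℤ))
      = ∑ k ∈ range N, (-((1:ℝ)/(12*N))*(6*(k:ℝ)^2) + ((1:ℝ)/4)*(2*(k:ℝ))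
          + (-(((N:ℝ)^2-1)/(12*N)))) := Finset.sum_congr rfl step
    _ = -((1:ℝ)/(12*N)) * (∑ k ∈ range N, 6*(k:ℝ)^2) + ((1:ℝ)/4)*(∑ k ∈ range N, 2*(k:ℝ))
          + (range N).card • (-(((N:ℝ)^2-1)/(12*N))) := by
        rw [Finset.sum_add_distrib, Finset.sum_add_distrib, Finset.mul_sum, Finset.mul_sum,
          Finset.sum_const]
    _ = 0 := by
        rw [h1, h2, card_range, nsmul_eq_mul]
        field_simp
        ring

private lemma penrose_unique {n : ℕ} (A B C : Matrix (Fin n) (Fin n) ℝ)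
    (hB1 : A*B*A = A) (hB2 : B*A*B = B) (hB3 : (A*B)ᵀ = A*B) (hB4 : (B*A)ᵀ = B*A)
    (hC1 : A*C*A = A) (hC2 : C*A*C = C) (hC3 : (A*C)ᵀ = A*C) (hC4 : (C*A)ᵀ = C*A) :
    B = C := by
  have hAB : A*B = A*C := by
    calc A*B = (A*B)ᵀ := hB3.symm
    _ = Bᵀ * Aᵀ := by rw [Matrix.transpose_mul]
    _ = Bᵀ * (A*C*A)ᵀ := by rw [hC1]
    _ = Bᵀ * (Aᵀ * (A*C)ᵀ) := by rw [Matrix.transpose_mul]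
    _ = (Bᵀ * Aᵀ) * (A*C) := by rw [hC3]; noncomm_ring
    _ = (A*B)ᵀ * (A*C) := by rw [Matrix.transpose_mul]
    _ = (A*B) * (A*C) := by rw [hB3]
    _ = (A*B*A)*C := by noncomm_ring
    _ = A*C := by rw [hB1]
  have hBA : B*A = C*A := by
    calc B*A = (B*A)ᵀ := hB4.symm
    _ = Aᵀ * Bᵀ := by rw [Matrix.transpose_mul]
    _ = (A*C*A)ᵀ * Bᵀ := by rw [hC1]
    _ = ((C*A)ᵀ * Aᵀ) * Bᵀ := by
        rw [show A*C*A = A*(C*A) by noncomm_ring, Matrix.transpose_mul]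
    _ = (C*A) * (Aᵀ * Bᵀ) := by rw [hC4]; noncomm_ring
    _ = (C*A) * (B*A)ᵀ := by rw [Matrix.transpose_mul]
    _ = (C*A) * (B*A) := by rw [hB4]
    _ = C*(A*B*A) := by noncomm_ring
    _ = C*A := by rw [hB1]
  calc B = B*A*B := hB2.symm
  _ = (C*A)*B := by rw [hBA]
  _ = C*(A*B) := by noncomm_ring
  _ = C*(A*C) := by rw [hAB]
  _ = C*A*C := by noncomm_ring
  _ = C := hC2

theorem cycle_laplacian_pi_pseudoinverse_formula
    (N : ℕ) (hN : 4 ≤ N) (hNeven : Even N)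
    (A L M K LC : Matrix (Fin N) (Fin N) ℝ)
    (hA : ∀ i j, A i j =
      if j.val = (i.val + 1) % N ∨ i.val = (j.val + 1) % N then 1 else 0)
    (hL : L = (-2 : ℝ) • (1 : Matrix (Fin N) (Fin N) ℝ) - A)
    (hM : ∀ m n, M m n =
      (-1 : ℝ) ^ ((((n.val : ℤ) - (m.val : ℤ)).natAbs) + 1) *
        (((n.val : ℝ) - (m.val : ℝ)) ^ 2 / (2 * N)
          - ((((n.val : ℤ) - (m.val : ℤ)).natAbs : ℝ)) / 2
          + ((N : ℝ) ^ 2 - 1) / (12 * N)))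
    (hK : ∀ m n, K m n = (-1 : ℝ) ^ ((n.val : ℤ) - (m.val : ℤ)))
    (hLC : ∀ i j, LC i j =
      if i = j then 2
      else if j.val = (i.val + 1) % N ∨ i.val = (j.val + 1) % N then -1 else 0) :
    L * M = 1 - ((N : ℝ))⁻¹ • K ∧
    M * L = 1 - ((N : ℝ))⁻¹ • K ∧
    M * K = 0 ∧ K * M = 0 ∧
    L * M * L = L ∧ M * L * M = M ∧ (L * M)ᵀ = L * M ∧ (M * L)ᵀ = M * L ∧
    (∀ MC : Matrix (Fin N) (Fin N) ℝ,
      LC * MC * LC = LC → MC * LC * MC = MC →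
      (LC * MC)ᵀ = LC * MC → (MC * LC)ᵀ = MC * LC →
      ∀ m n, M m n = (-1 : ℝ) ^ ((((n.val : ℤ) - (m.val : ℤ)).natAbs) + 1) * MC m n) := by
  have hNpos : 0 < N := by omega
  haveI : NeZero N := ⟨by omega⟩
  have hN0 : (N:ℝ) ≠ 0 := by positivity
  have hN2 : N % 2 = 0 := Nat.even_iff.mp hNeven
  have hv1 : (1 : Fin N).val = 1 := by
    rw [Fin.val_one' N, Nat.mod_eq_of_lt (by omega)]
  have hadd : ∀ i : Fin N, ((i+1 : Fin N).val) = (i.val + 1) % N := by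
    intro i; rw [Fin.add_def, hv1]
  have hsub : ∀ i : Fin N, ((i-1 : Fin N).val) = (N - 1 + i.val) % N := by
    intro i; rw [Fin.sub_def, hv1]
  have hpar : ∀ x : ℕ, (-1:ℝ)^(x % N) = (-1)^x := by
    intro x
    exact negpow_mod2 (Nat.mod_mod_of_dvd x (even_iff_two_dvd.mp hNeven))
  have hsq : ∀ x : ℕ, (-1:ℝ)^x * (-1)^x = 1 := by
    intro x; rw [← mul_pow]; norm_num
  -- product form of K
  have hK' : ∀ m n : Fin N, K m n = (-1:ℝ)^(m.val) * (-1)^(n.val) := by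
    intro m n
    rw [hK]
    rw [zpow_sub₀ (by norm_num : (-1:ℝ) ≠ 0), zpow_natCast, zpow_natCast]
    have hinv : ((-1:ℝ)^(m.val))⁻¹ = (-1:ℝ)^(m.val) := by
      rcases Nat.even_or_odd m.val with h|h
      · rw [h.neg_one_pow]; norm_num
      · rw [h.neg_one_pow]; norm_num
    rw [div_eq_mul_inv, hinv, mul_comm]
  -- M in terms of Gfun
  have hM' : ∀ m n : Fin N, M m n = Gfun N ((n.val:ℤ) - m.val) := by
    intro m n
    have him := m.isLt
    have hin := n.isLt
    rw [hM]
    rcases le_or_gt m.val n.val with h|h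
    · rw [Gfun_eq_gfun hNpos (by omega) (by omega)]
      unfold gfun
      push_cast
      ring
    · have hd : ((n.val:ℤ) - m.val) % N = (N:ℤ) - ((m.val:ℤ) - n.val) := by
        rw [show ((n.val:ℤ) - m.val) = ((N:ℤ) - ((m.val:ℤ) - n.val)) + N * (-1) by ring,
          Int.add_mul_emod_self_left, Int.emod_eq_of_lt (by omega) (by omega)]
      unfold Gfun
      rw [hd, gfun_symm hNeven hNpos (by omega) (by omega)]
      unfold gfun
      have hna : ((m.val:ℤ) - n.val).natAbs = ((n.val:ℤ) - m.val).natAbs := by omega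
      rw [hna]
      push_cast
      ring
  -- row expansion for L
  have hA' : ∀ i k : Fin N, A i k =
      (if k = i+1 then (1:ℝ) else 0) + (if k = i-1 then 1 else 0) := by
    intro i k
    have hne : (i+1 : Fin N) ≠ i - 1 := by
      intro h
      have h2 : (1 : Fin N) + 1 = 0 := by open Fin.CommRing in linear_combination h
      have h3 := congrArg Fin.val h2
      rw [hadd 1, hv1, Fin.val_zero, Nat.mod_eq_of_lt (by omega)] at h3
      omega
    have h1 : (k.val = (i.val + 1) % N) ↔ k = i + 1 := by
      rw [Fin.ext_iff, hadd i]
    have h2 : (i.val = (k.val + 1) % N) ↔ k = i - 1 := by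
      rw [eq_sub_iff_add_eq, Fin.ext_iff, hadd k, eq_comm]
    rw [hA]
    simp only [h1, h2]
    by_cases hk1 : k = i+1
    · by_cases hk2 : k = i-1
      · exact absurd (hk1.symm.trans hk2) hne
      · rw [if_pos (Or.inl hk1), if_pos hk1, if_neg hk2]; ring
    · by_cases hk2 : k = i-1
      · rw [if_pos (Or.inr hk2), if_neg hk1, if_pos hk2]; ring
      · rw [if_neg (by tauto), if_neg hk1, if_neg hk2]; ring
  have hrow : ∀ (v : Fin N → ℝ) (i : Fin N),
      ∑ k, L i k * v k = -(2 * v i) - v (i+1) - v (i-1) := by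
    intro v i
    have expand : ∀ k, L i k * v k = (-2) * (if i = k then v k else 0)
        - (if k = i+1 then v k else 0) - (if k = i-1 then v k else 0) := by
      intro k
      rw [hL]
      simp only [Matrix.sub_apply, Matrix.smul_apply, Matrix.one_apply, hA' i k, smul_eq_mul]
      split_ifs <;> ring
    rw [Finset.sum_congr rfl (fun k _ => expand k), Finset.sum_sub_distrib,
      Finset.sum_sub_distrib, ← Finset.mul_sum, Finset.sum_ite_eq, Finset.sum_ite_eq',
      Finset.sum_ite_eq']
    simp only [Finset.mem_univ, if_true]
    ring
  -- the main identity L*M = 1 - N⁻¹ K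
  have hLM : L * M = 1 - ((N : ℝ))⁻¹ • K := by
    ext i j
    have him := i.isLt
    have hjn := j.isLt
    rw [Matrix.mul_apply, hrow (fun k => M k j) i]
    have e0 : M i j = Gfun N ((j.val:ℤ) - i.val) := hM' i j
    have e1 : M (i+1) j = Gfun N ((j.val:ℤ) - i.val - 1) := by
      rw [hM' (i+1) j]
      apply Gfun_congr
      have hc : (((i+1 : Fin N).val : ℤ)) = ((i.val:ℤ)+1) % N := by
        rw [hadd]; push_cast; ring
      rw [hc, Int.sub_emod, Int.emod_emod_of_dvd _ dvd_rfl, ← Int.sub_emod]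
      ring_nf
    have e2 : M (i-1) j = Gfun N ((j.val:ℤ) - i.val + 1) := by
      rw [hM' (i-1) j]
      apply Gfun_congr
      have hc : (((i-1 : Fin N).val : ℤ)) = ((N:ℤ) - 1 + i.val) % N := by
        rw [hsub]; push_cast [Nat.cast_sub (by omega : 1 ≤ N)]; ring_nf
      rw [hc, Int.sub_emod, Int.emod_emod_of_dvd _ dvd_rfl, ← Int.sub_emod,
        show ((j.val:ℤ) - ((N:ℤ) - 1 + i.val)) = ((j.val:ℤ) - i.val + 1) + N * (-1) by ring,
        Int.add_mul_emod_self_left]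
    rw [e0, e1, e2]
    rw [Matrix.sub_apply, Matrix.one_apply, Matrix.smul_apply, smul_eq_mul, hK' i j]
    rcases le_or_gt i.val j.val with hij|hij
    · have hrec := Gfun_rec hN hNeven ((j.val:ℤ) - i.val) (by omega) (by omega)
      rw [hrec]
      have hiff : (((j.val:ℤ) - i.val) = 0) ↔ (i = j) := by
        rw [Fin.ext_iff]; omega
      have hsign : (-1:ℝ)^(((j.val:ℤ) - i.val).natAbs) = (-1)^(i.val) * (-1)^(j.val) := by
        rw [← pow_add]
        apply negpow_mod2
        omega
      rw [hsign]
      by_cases hq : i = j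
      · rw [if_pos hq, if_pos (hiff.mpr hq)]; ring
      · rw [if_neg hq, if_neg (fun hh => hq (hiff.mp hh))]; ring
    · have harg : ∀ t : ℤ, Gfun N ((j.val:ℤ) - i.val + t) = Gfun N ((j.val:ℤ) - i.val + N + t) := by
        intro t
        apply Gfun_congr
        rw [show ((j.val:ℤ) - i.val + N + t) = ((j.val:ℤ) - i.val + t) + N * 1 by ring,
          Int.add_mul_emod_self_left]
      have ha0 : Gfun N ((j.val:ℤ) - i.val) = Gfun N ((j.val:ℤ) - i.val + N) := by
        have := harg 0; rw [add_zero, add_zero] at this; exact this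
      have ha1 : Gfun N ((j.val:ℤ) - i.val - 1) = Gfun N ((j.val:ℤ) - i.val + N - 1) := by
        have := harg (-1)
        rw [show (j.val:ℤ) - i.val + -1 = (j.val:ℤ) - i.val - 1 by ring,
          show (j.val:ℤ) - i.val + N + -1 = (j.val:ℤ) - i.val + N - 1 by ring] at this
        exact this
      have ha2 : Gfun N ((j.val:ℤ) - i.val + 1) = Gfun N ((j.val:ℤ) - i.val + N + 1) := harg 1
      rw [ha0, ha1, ha2]
      have hrec := Gfun_rec hN hNeven ((j.val:ℤ) - i.val + N) (by omega) (by omega)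
      rw [hrec, if_neg (by omega), if_neg (by intro hh; rw [hh] at hij; omega)]
      have hsign : (-1:ℝ)^(((j.val:ℤ) - i.val + N).natAbs) = (-1)^(i.val) * (-1)^(j.val) := by
        rw [← pow_add]
        apply negpow_mod2
        omega
      rw [hsign]
      ring
  -- symmetries
  have hAsym : Aᵀ = A := by
    ext i j
    rw [Matrix.transpose_apply, hA j i, hA i j]
    exact if_congr or_comm rfl rfl
  have hLsym : Lᵀ = L := by
    rw [hL, Matrix.transpose_sub, Matrix.transpose_smul, Matrix.transpose_one, hAsym]
  have hMsym : Mᵀ = M := by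
    ext i j
    rw [Matrix.transpose_apply, hM, hM]
    have hna : ((i.val:ℤ) - j.val).natAbs = ((j.val:ℤ) - i.val).natAbs := by omega
    rw [hna]
    ring
  have hKsym : Kᵀ = K := by
    ext i j
    rw [Matrix.transpose_apply, hK' j i, hK' i j]
    ring
  -- M*K = 0
  have hMK : M * K = 0 := by
    ext i j
    rw [Matrix.mul_apply, Matrix.zero_apply]
    have step : ∀ k : Fin N, M i k * K k j =
        ((-1:ℝ)^(j.val)) * ((-1)^(k.val) * Gfun N ((k.val:ℤ) - i.val)) := by
      intro k; rw [hM' i k, hK' k j]; ring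
    rw [Finset.sum_congr rfl (fun k _ => step k), ← Finset.mul_sum]
    have hzero : ∑ k : Fin N, (-1:ℝ)^(k.val) * Gfun N ((k.val:ℤ) - i.val) = 0 := by
      rw [← Equiv.sum_comp (Equiv.addRight i)
        (fun k : Fin N => (-1:ℝ)^(k.val) * Gfun N ((k.val:ℤ) - i.val))]
      have hterm : ∀ k : Fin N,
          (-1:ℝ)^(((Equiv.addRight i) k).val) * Gfun N ((((Equiv.addRight i) k).val:ℤ) - i.val)
          = (-1:ℝ)^(i.val) * ((-1)^(k.val) * gfun N (k.val:ℤ)) := by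
        intro k
        have hv : (((Equiv.addRight i) k).val) = (k.val + i.val) % N := by
          simp only [Equiv.coe_addRight]
          rw [Fin.add_def]
        have hsign : (-1:ℝ)^(((Equiv.addRight i) k).val) = (-1)^(i.val) * (-1)^(k.val) := by
          rw [hv, hpar, pow_add]; ring
        have hG : Gfun N ((((Equiv.addRight i) k).val:ℤ) - i.val) = gfun N (k.val:ℤ) := by
          have hmod : ((((Equiv.addRight i) k).val:ℤ) - i.val) % N = (k.val:ℤ) % N := by
            rw [hv]
            push_cast
            rw [Int.sub_emod, Int.emod_emod_of_dvd _ dvd_rfl, ← Int.sub_emod]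
            ring_nf
          rw [Gfun_congr hmod, Gfun_eq_gfun hNpos (by omega) (by exact_mod_cast k.isLt)]
        rw [hsign, hG]
        ring
      rw [Finset.sum_congr rfl (fun k _ => hterm k), ← Finset.mul_sum]
      rw [Fin.sum_univ_eq_sum_range (fun x => (-1:ℝ)^x * gfun N (x:ℤ)) N]
      rw [sum_gfun_alt hN, mul_zero]
    rw [hzero, mul_zero]
  -- L*K = 0
  have hLK : L * K = 0 := by
    ext i j
    rw [Matrix.mul_apply, Matrix.zero_apply, hrow (fun k => K k j) i]
    rw [hK' i j, hK' (i+1) j, hK' (i-1) j]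
    have s1 : (-1:ℝ)^((i+1:Fin N).val) = -(-1)^(i.val) := by
      rw [hadd, hpar, pow_succ]; ring
    have s2 : (-1:ℝ)^((i-1:Fin N).val) = -(-1)^(i.val) := by
      rw [hsub, hpar]
      have : (-1:ℝ)^(N-1+i.val) = (-1)^(i.val+1) := negpow_mod2 (by omega)
      rw [this, pow_succ]; ring
    rw [s1, s2]
    ring
  -- consequences by transpose
  have hML : M * L = 1 - ((N : ℝ))⁻¹ • K := by
    have h1 : (L*M)ᵀ = M * L := by rw [Matrix.transpose_mul, hMsym, hLsym]
    rw [← h1, hLM, Matrix.transpose_sub, Matrix.transpose_one, Matrix.transpose_smul, hKsym]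
  have hKM : K * M = 0 := by
    have h1 : (M*K)ᵀ = K * M := by rw [Matrix.transpose_mul, hMsym, hKsym]
    rw [← h1, hMK, Matrix.transpose_zero]
  have hKL : K * L = 0 := by
    have h1 : (L*K)ᵀ = K * L := by rw [Matrix.transpose_mul, hLsym, hKsym]
    rw [← h1, hLK, Matrix.transpose_zero]
  have hLML : L * M * L = L := by
    rw [hLM, Matrix.sub_mul, Matrix.one_mul, Matrix.smul_mul, hKL, smul_zero, sub_zero]
  have hMLM : M * L * M = M := by
    rw [hML, Matrix.sub_mul, Matrix.one_mul, Matrix.smul_mul, hKM, smul_zero, sub_zero]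
  have hLMT : (L * M)ᵀ = L * M := by
    rw [hLM, Matrix.transpose_sub, Matrix.transpose_one, Matrix.transpose_smul, hKsym]
  have hMLT : (M * L)ᵀ = M * L := by
    rw [hML, Matrix.transpose_sub, Matrix.transpose_one, Matrix.transpose_smul, hKsym]
  refine ⟨hLM, hML, hMK, hKM, hLML, hMLM, hLMT, hMLT, ?_⟩
  intro MC p1 p2 p3 p4 m n
  -- diagonal sign matrix
  set D : Matrix (Fin N) (Fin N) ℝ := Matrix.diagonal (fun i : Fin N => (-1:ℝ)^(i.val)) with hD
  have hDD : D * D = 1 := by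
    rw [hD, Matrix.diagonal_mul_diagonal]
    ext i j
    by_cases h : i = j
    · subst h
      rw [Matrix.diagonal_apply_eq, Matrix.one_apply_eq, hsq]
    · rw [Matrix.diagonal_apply_ne _ h, Matrix.one_apply_ne h]
  have hDT : Dᵀ = D := Matrix.diagonal_transpose _
  have hDLD : ∀ (X : Matrix (Fin N) (Fin N) ℝ) (i j : Fin N),
      (D * X * D) i j = (-1:ℝ)^(i.val) * X i j * (-1)^(j.val) := by
    intro X i j
    rw [Matrix.mul_diagonal, Matrix.diagonal_mul]
  have hadjpar : ∀ i j : Fin N,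
      (j.val = (i.val + 1) % N ∨ i.val = (j.val + 1) % N) →
      (-1:ℝ)^(i.val) * (-1)^(j.val) = -1 := by
    intro i j h
    rcases h with h|h
    · rw [h, hpar]
      calc (-1:ℝ)^(i.val) * (-1)^(i.val+1) = -((-1:ℝ)^(i.val)*(-1)^(i.val)) := by
            rw [pow_succ]; ring
      _ = -1 := by rw [hsq]
    · rw [h, hpar]
      calc (-1:ℝ)^(j.val+1) * (-1)^(j.val) = -((-1:ℝ)^(j.val)*(-1)^(j.val)) := by
            rw [pow_succ]; ring
      _ = -1 := by rw [hsq]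
  have hLC2 : LC = -(D * L * D) := by
    ext i j
    rw [hLC, Matrix.neg_apply, hDLD]
    rw [hL]
    simp only [Matrix.sub_apply, Matrix.smul_apply, Matrix.one_apply, hA i j, smul_eq_mul]
    by_cases hij : i = j
    · subst hij
      have hne : ¬ (i.val = (i.val + 1) % N ∨ i.val = (i.val + 1) % N) := by
        rw [or_self]
        rcases Nat.lt_or_ge (i.val+1) N with h|h
        · rw [Nat.mod_eq_of_lt h]; omega
        · have hie : i.val = N - 1 := by have := i.isLt; omega
          rw [hie, show (N-1+1) = N by omega, Nat.mod_self]; omega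
      rw [if_pos rfl, if_pos rfl, if_neg hne]
      have := hsq i.val
      nlinarith [hsq i.val]
    · rw [if_neg hij, if_neg hij]
      by_cases hadj : (j.val = (i.val + 1) % N ∨ i.val = (j.val + 1) % N)
      · rw [if_pos hadj, if_pos hadj]
        have := hadjpar i j hadj
        nlinarith [hadjpar i j hadj]
      · rw [if_neg hadj, if_neg hadj]
        ring
  set Mz : Matrix (Fin N) (Fin N) ℝ :=
    Matrix.of (fun a b : Fin N =>
      (-1 : ℝ) ^ ((((b.val : ℤ) - (a.val : ℤ)).natAbs) + 1) * M a b) with hMz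
  have hMz2 : Mz = -(D * M * D) := by
    ext a b
    rw [hMz, Matrix.of_apply, Matrix.neg_apply, hDLD]
    have hsign : (-1:ℝ)^((((b.val : ℤ) - (a.val : ℤ)).natAbs) + 1)
        = (-1:ℝ)^(a.val + b.val + 1) := negpow_mod2 (by omega)
    rw [hsign, pow_succ, pow_add]
    ring
  have key : ∀ X Y : Matrix (Fin N) (Fin N) ℝ, (D*X*D) * (D*Y*D) = D*(X*Y)*D := by
    intro X Y
    calc (D*X*D)*(D*Y*D) = D*X*(D*D)*Y*D := by noncomm_ring
    _ = D*(X*Y)*D := by rw [hDD]; noncomm_ring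
  have trip : ∀ X : Matrix (Fin N) (Fin N) ℝ, Xᵀ = X → (D*X*D)ᵀ = D*X*D := by
    intro X hX
    rw [Matrix.transpose_mul, Matrix.transpose_mul, hX, hDT]
    noncomm_ring
  have eLCMz : LC * Mz = D*(L*M)*D := by
    rw [hLC2, hMz2]
    calc -(D*L*D) * -(D*M*D) = (D*L*D)*(D*M*D) := by noncomm_ring
    _ = D*(L*M)*D := key L M
  have eMzLC : Mz * LC = D*(M*L)*D := by
    rw [hLC2, hMz2]
    calc -(D*M*D) * -(D*L*D) = (D*M*D)*(D*L*D) := by noncomm_ring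
    _ = D*(M*L)*D := key M L
  have hq1 : LC * Mz * LC = LC := by
    rw [show LC * Mz * LC = (LC * Mz) * LC by noncomm_ring, eLCMz, hLC2]
    calc D*(L*M)*D * -(D*L*D) = -((D*(L*M)*D) * (D*L*D)) := by noncomm_ring
    _ = -(D*((L*M)*L)*D) := by rw [key]
    _ = -(D*L*D) := by rw [hLML]
  have hq2 : Mz * LC * Mz = Mz := by
    rw [show Mz * LC * Mz = (Mz * LC) * Mz by noncomm_ring, eMzLC, hMz2]
    calc D*(M*L)*D * -(D*M*D) = -((D*(M*L)*D) * (D*M*D)) := by noncomm_ring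
    _ = -(D*((M*L)*M)*D) := by rw [key]
    _ = -(D*M*D) := by rw [hMLM]
  have hq3 : (LC * Mz)ᵀ = LC * Mz := by
    rw [eLCMz]; exact trip _ hLMT
  have hq4 : (Mz * LC)ᵀ = Mz * LC := by
    rw [eMzLC]; exact trip _ hMLT
  have hMCeq : MC = Mz := penrose_unique LC MC Mz p1 p2 p3 p4 hq1 hq2 hq3 hq4
  rw [hMCeq, hMz, Matrix.of_apply, ← mul_assoc, hsq, one_mul]
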